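/- Let c ≥ 1, Q² ∈ (0,1), P̄₂ ∈ ℝ/cℤ. The complement of U_{Q²,P̄₂} = V_{Q²} × W_{P̄₂} in the cylinder (ℝ/ℤ) × (0,1) is path-connected, where V_{Q²} = (ℝ/ℤ) \ {−c·Q² + ℤ} and W_{P̄₂} = { P₁ ∈ (0,1) : ∃ p₂ ∈ (0,1), c·P₁ + p₂ + cℤ = P̄₂ }. -/
import Mathlib


open Set

/-- For `c ≥ 1`, `Q² ∈ (0,1)`, `P̄₂ ∈ ℝ/cℤ`, the complement of `U = V_{Q²} × W_{P̄₂}`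
in the open cylinder `(ℝ/ℤ) × (0,1)` is path-connected. -/
theorem stmt9 (c : ℝ) (hc : 1 ≤ c) (Q2 : ℝ) (hQ2 : Q2 ∈ Ioo (0:ℝ) 1) (P2 : AddCircle c) :
    IsPathConnected
      (((univ : Set (AddCircle (1:ℝ))) ×ˢ Ioo (0:ℝ) 1) \
        ((({((-(c * Q2) : ℝ) : AddCircle (1:ℝ))} : Set (AddCircle (1:ℝ)))ᶜ) ×ˢ
          {P1 : ℝ | P1 ∈ Ioo (0:ℝ) 1 ∧
            ∃ p2 ∈ Ioo (0:ℝ) 1, ((c * P1 + p2 : ℝ) : AddCircle c) = P2})) := by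
  set a : AddCircle (1:ℝ) := ((-(c * Q2) : ℝ) : AddCircle (1:ℝ)) with ha
  set W : Set ℝ := {P1 : ℝ | P1 ∈ Ioo (0:ℝ) 1 ∧
      ∃ p2 ∈ Ioo (0:ℝ) 1, ((c * P1 + p2 : ℝ) : AddCircle c) = P2} with hW
  set S := ((univ : Set (AddCircle (1:ℝ))) ×ˢ Ioo (0:ℝ) 1) \
      ((({a} : Set (AddCircle (1:ℝ)))ᶜ) ×ˢ W) with hS
  have hmem : ∀ p : AddCircle (1:ℝ) × ℝ,
      p ∈ S ↔ p.2 ∈ Ioo (0:ℝ) 1 ∧ (p.1 = a ∨ p.2 ∉ W) := by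
    intro p
    simp only [hS, mem_diff, mem_prod, mem_univ, true_and, mem_compl_iff,
      mem_singleton_iff, not_and_or, not_not]
  -- vertical paths on the line {a} × (0,1)
  have hvert : ∀ y ∈ Ioo (0:ℝ) 1, JoinedIn S (a, y) (a, Q2) := by
    intro y hy
    refine ⟨⟨⟨fun t => (a, (1 - (t:ℝ)) * y + (t:ℝ) * Q2), by fun_prop⟩, by norm_num, by norm_num⟩, ?_⟩
    intro t
    refine (hmem _).2 ⟨?_, Or.inl rfl⟩
    have := (convex_Ioo (0:ℝ) 1) hy hQ2 (sub_nonneg.2 t.2.2) t.2.1 (by ring)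
    simpa [smul_eq_mul] using this
  -- horizontal paths at heights outside W
  have hhor : ∀ (x : AddCircle (1:ℝ)) (y : ℝ), y ∈ Ioo (0:ℝ) 1 → y ∉ W →
      JoinedIn S (x, y) (a, y) := by
    intro x y hy hyW
    obtain ⟨x', rfl⟩ := QuotientAddGroup.mk_surjective x
    refine ⟨⟨⟨fun t => ((((1 - (t:ℝ)) * x' + (t:ℝ) * (-(c * Q2)) : ℝ) : AddCircle (1:ℝ)), y),
      ?_⟩, by norm_num, by norm_num [ha]⟩, ?_⟩
    · exact Continuous.prodMk
        ((AddCircle.continuous_mk' (1:ℝ)).comp (by fun_prop)) continuous_const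
    · intro t
      exact (hmem _).2 ⟨hy, Or.inr hyW⟩
  refine ⟨(a, Q2), (hmem _).2 ⟨hQ2, Or.inl rfl⟩, ?_⟩
  rintro ⟨x, y⟩ hp
  obtain ⟨hy, hcase⟩ := (hmem _).1 hp
  rcases hcase with rfl | hyW
  · exact (hvert y hy).symm
  · exact ((hhor x y hy hyW).trans (hvert y hy)).symm
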